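/- For the projected Weiszfeld iteration x_{k+1} = Π_C(T(x_k)) with x_k ∈ C \ {a₁,...,aₘ}, the objective decreases: f(x_{k+1}) ≤ f(x_k); moreover f(x_{k+1}) = f(x_k) if and only if x_{k+1} = x_k. -/

import Mathlib

open Finset
open scoped RealInnerProductSpace

/-- The Weiszfeld operator. -/
noncomputable def weiszfeldT {H : Type*} [NormedAddCommGroup H] [InnerProductSpace ℝ H]
    {m : ℕ} (w : Fin m → ℝ) (a : Fin m → H) (x : H) : H :=
  (∑ i, w i / ‖x - a i‖)⁻¹ • ∑ i, (w i / ‖x - a i‖) • a i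

set_option maxHeartbeats 1000000 in
theorem projected_weiszfeld_descent
    {H : Type*} [NormedAddCommGroup H] [InnerProductSpace ℝ H] [CompleteSpace H]
    {m : ℕ} (hm : 1 ≤ m) (a : Fin m → H) (w : Fin m → ℝ) (hw : ∀ i, 0 < w i)
    (hcol : ¬ ∃ u v : H, ∀ i, ∃ t : ℝ, a i = u + t • v)
    (C : Set H) (hCne : C.Nonempty) (hCclosed : IsClosed C) (hCconv : Convex ℝ C)
    (proj : H → H)
    (hproj : ∀ x : H, proj x ∈ C ∧ ∀ z ∈ C, ⟪x - proj x, z - proj x⟫ ≤ 0)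
    (xk : H) (hxkC : xk ∈ C) (hxkA : xk ∉ Set.range a) :
    (∑ i, w i * ‖proj (weiszfeldT w a xk) - a i‖) ≤ (∑ i, w i * ‖xk - a i‖) ∧
      ((∑ i, w i * ‖proj (weiszfeldT w a xk) - a i‖) = (∑ i, w i * ‖xk - a i‖) ↔
        proj (weiszfeldT w a xk) = xk) := by
  classical
  haveI : Nonempty (Fin m) := ⟨⟨0, hm⟩⟩
  set T := weiszfeldT w a xk with hT
  set p := proj T with hp
  have hd : ∀ i, 0 < ‖xk - a i‖ := by
    intro i
    have hne : xk ≠ a i := fun h => hxkA ⟨i, h.symm⟩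
    simpa [norm_pos_iff, sub_ne_zero] using hne
  set η : Fin m → ℝ := fun i => w i / ‖xk - a i‖ with hη
  have hηpos : ∀ i, 0 < η i := fun i => div_pos (hw i) (hd i)
  set S : ℝ := ∑ i, η i with hS
  have hSpos : 0 < S := Finset.sum_pos (fun i _ => hηpos i) Finset.univ_nonempty
  have hST : S • T = ∑ i, η i • a i := by
    rw [hT, weiszfeldT, smul_smul]
    have : (∑ i, w i / ‖xk - a i‖) = S := by rw [hS]
    rw [this, mul_inv_cancel₀ hSpos.ne', one_smul]
  have hinner : ∀ y : H, ∑ i, η i * ⟪y, a i⟫ = S * ⟪y, T⟫ := by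
    intro y
    rw [← real_inner_smul_right, hST, inner_sum]
    simp [real_inner_smul_right]
  have expand : ∀ y : H, ∑ i, η i * ‖y - a i‖ ^ 2
      = S * ‖y‖ ^ 2 - 2 * (S * ⟪y, T⟫) + ∑ i, η i * ‖a i‖ ^ 2 := by
    intro y
    rw [← hinner y, hS, Finset.sum_mul, Finset.mul_sum, ← Finset.sum_sub_distrib,
      ← Finset.sum_add_distrib]
    refine Finset.sum_congr rfl fun i _ => ?_
    rw [@norm_sub_sq_real]; ring
  have hq : ∀ y : H, ∑ i, η i * ‖y - a i‖ ^ 2 - S * ‖y - T‖ ^ 2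
      = ∑ i, η i * ‖a i‖ ^ 2 - S * ‖T‖ ^ 2 := by
    intro y
    rw [expand y, @norm_sub_sq_real]; ring
  have hqxk : ∑ i, η i * ‖xk - a i‖ ^ 2 = ∑ i, w i * ‖xk - a i‖ := by
    refine Finset.sum_congr rfl fun i _ => ?_
    have hdi := (hd i).ne'
    simp only [hη]
    field_simp
  -- projection inequality
  obtain ⟨hpC, hpineq⟩ := hproj T
  have hpi : ⟪T - p, xk - p⟫ ≤ 0 := hpineq xk hxkC
  have hprojineq : ‖p - T‖ ^ 2 + ‖xk - p‖ ^ 2 ≤ ‖xk - T‖ ^ 2 := by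
    have h1 : xk - T = (xk - p) - (T - p) := by abel
    have h2 : ‖(xk - p) - (T - p)‖ ^ 2
        = ‖xk - p‖ ^ 2 - 2 * ⟪xk - p, T - p⟫ + ‖T - p‖ ^ 2 := by
      rw [@norm_sub_sq_real]
    have h3 : ‖T - p‖ = ‖p - T‖ := norm_sub_rev _ _
    have h4 : ⟪xk - p, T - p⟫ = ⟪T - p, xk - p⟫ := real_inner_comm _ _
    rw [h1, h2, h3, h4]
    nlinarith [hpi]
  -- majorization
  have hmaj : ∑ i, w i * ‖p - a i‖
      ≤ (∑ i, η i * ‖p - a i‖ ^ 2 + ∑ i, w i * ‖xk - a i‖) / 2 := by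
    rw [← Finset.sum_add_distrib, Finset.sum_div]
    refine Finset.sum_le_sum fun i _ => ?_
    have hdi := hd i
    have hei := hηpos i
    have hwd : w i = η i * ‖xk - a i‖ := by simp only [hη]; field_simp
    rw [hwd]
    nlinarith [mul_nonneg hei.le (sq_nonneg (‖p - a i‖ - ‖xk - a i‖))]
  -- combine
  have hqp := hq p
  have hqx := hq xk
  have hmul : S * (‖p - T‖ ^ 2 + ‖xk - p‖ ^ 2) ≤ S * ‖xk - T‖ ^ 2 :=
    mul_le_mul_of_nonneg_left hprojineq hSpos.le
  have key : ∑ i, w i * ‖p - a i‖ + (S / 2) * ‖xk - p‖ ^ 2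
      ≤ ∑ i, w i * ‖xk - a i‖ := by
    nlinarith [hqp, hqx, hqxk, hmaj, hmul]
  have hsq : 0 ≤ (S / 2) * ‖xk - p‖ ^ 2 :=
    mul_nonneg (by positivity) (sq_nonneg _)
  refine ⟨by linarith, ?_, ?_⟩
  · intro heq
    have h0 : (S / 2) * ‖xk - p‖ ^ 2 ≤ 0 := by linarith
    have h1 : ‖xk - p‖ ^ 2 ≤ 0 := by
      by_contra h
      push_neg at h
      nlinarith
    have h2 : ‖xk - p‖ = 0 := by nlinarith [norm_nonneg (xk - p)]
    exact (norm_sub_eq_zero_iff.mp h2).symm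
  · intro heq
    rw [heq]
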